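/- Suppose for each integer k ≥ 2 the sequence α_k(n) converges as n → ∞ to a real number α_k. Then lim_{k→∞} α_k = 1 (the function k ↦ α_k tends to 1 along the atTop filter on ℕ). -/

import Mathlib

open Filter

namespace Levenshtein

/-- Costs of edit operations (as in the older Mathlib). -/
structure Cost (α β δ : Type*) where
  delete : α → δ
  insert : β → δ
  substitute : α → β → δ

/-- Unit costs for deletion, insertion and substitution, cost `0` for a match. -/
def defaultCost {α : Type*} [DecidableEq α] : Cost α α ℕ where
  delete _ := 1
  insert _ := 1
  substitute a b := if a = b then 0 else 1

/-- One row step of the dynamic program (as in the older Mathlib). -/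
def impl {α β δ : Type*} [AddZeroClass δ] [Min δ] (C : Cost α β δ) (xs : List α) (y : β)
    (d : {r : List δ // 0 < r.length}) : {r : List δ // 0 < r.length} :=
  let ⟨ds, w⟩ := d
  xs.zip (ds.zip ds.tail) |>.foldr
    (init := ⟨[ds.getLast (List.length_pos_iff.mp w) + C.insert y], by simp⟩)
    (fun ⟨x, d₀, d₁⟩ ⟨r, w⟩ =>
      ⟨min (C.delete x + r[0]) (min (C.insert y + d₀) (C.substitute x y + d₁)) :: r, by simp⟩)

end Levenshtein

open Levenshtein

/-- Edit distances between all suffixes (as in the older Mathlib). -/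
def suffixLevenshtein {α β δ : Type*} [AddZeroClass δ] [Min δ] (C : Cost α β δ)
    (xs : List α) (ys : List β) : {r : List δ // 0 < r.length} :=
  ys.foldr
    (impl C xs)
    (xs.foldr (init := ⟨[0], by simp⟩) (fun a ⟨r, w⟩ => ⟨(C.delete a + r[0]) :: r, by simp⟩))

/-- The Levenshtein edit distance (as in the older Mathlib). -/
def levenshtein {α β δ : Type*} [AddZeroClass δ] [Min δ] (C : Cost α β δ)
    (xs : List α) (ys : List β) : δ :=
  let ⟨r, _⟩ := suffixLevenshtein C xs ys
  r[0]

/-- Edit distance between two strings over `Fin k`, with unit costs for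
substitution, deletion and insertion, and cost `0` for a match. -/
def editDist {k : ℕ} (x y : List (Fin k)) : ℕ :=
  levenshtein Levenshtein.defaultCost x y

/-- `e_k(n)`: the average edit distance between two independent uniformly
random strings of length `n` over an alphabet of size `k`. -/
noncomputable def avgEditDist (k n : ℕ) : ℝ :=
  ((k : ℝ) ^ (2 * n))⁻¹ *
    ∑ x : Fin n → Fin k, ∑ y : Fin n → Fin k,
      (editDist (List.ofFn x) (List.ofFn y) : ℝ)

/-- `α_k(n) = e_k(n)/n`. -/
noncomputable def alphaN (k n : ℕ) : ℝ := avgEditDist k n / n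

namespace Levenshtein

variable {α β δ : Type*} [AddZeroClass δ] [Min δ] (C : Cost α β δ)

theorem impl_cons {x : α} {xs : List α} {y : β} {d : δ} {ds : List δ} {w}
    (w' : 0 < List.length ds) :
    impl C (x :: xs) y ⟨d :: ds, w⟩ = let ⟨r, w⟩ := impl C xs y ⟨ds, w'⟩
      ⟨min (C.delete x + r[0]) (min (C.insert y + d) (C.substitute x y + ds[0])) :: r, by simp⟩ :=
  match ds, w' with | _ :: _, _ => rfl

theorem impl_cons_fst_zero {x : α} {xs : List α} {y : β} {d : δ} {ds : List δ} {w} (h)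
    (w' : 0 < List.length ds) :
    (impl C (x :: xs) y ⟨d :: ds, w⟩).1[0]'h = let ⟨r, w⟩ := impl C xs y ⟨ds, w'⟩
      min (C.delete x + r[0]) (min (C.insert y + d) (C.substitute x y + ds[0])) :=
  match ds, w' with | _ :: _, _ => rfl

theorem impl_length {xs : List α} {y : β} (d : {r : List δ // 0 < r.length})
    (w : d.1.length = xs.length + 1) :
    (impl C xs y d).1.length = xs.length + 1 := by
  induction xs generalizing d with
  | nil => rfl
  | cons x xs ih =>
    dsimp [impl]
    match d, w with
    | ⟨d₁ :: d₂ :: ds, _⟩, w =>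
      dsimp
      congr 1
      exact ih ⟨d₂ :: ds, (by simp)⟩ (by simpa using w)

end Levenshtein

open Levenshtein

section levlemmas
variable {α β δ : Type*} [AddZeroClass δ] [Min δ] (C : Cost α β δ)

theorem suffixLevenshtein_length (xs : List α) (ys : List β) :
    (suffixLevenshtein C xs ys).1.length = xs.length + 1 := by
  induction ys with
  | nil =>
    dsimp [suffixLevenshtein]
    induction xs with
    | nil => rfl
    | cons _ xs ih =>
      simp_all
  | cons y ys ih =>
    dsimp [suffixLevenshtein]
    rw [impl_length]
    exact ih

theorem suffixLevenshtein_cons₂ (xs : List α) (y : β) (ys : List β) :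
    suffixLevenshtein C xs (y :: ys) = (impl C xs) y (suffixLevenshtein C xs ys) := rfl

theorem suffixLevenshtein_cons₁_aux {α} {x y : { l : List α // 0 < l.length }}
    (w₀ : x.1[0]'x.2 = y.1[0]'y.2) (w : x.1.tail = y.1.tail) : x = y := by
  match x, y with
  | ⟨hx :: tx, _⟩, ⟨hy :: ty, _⟩ => simp_all

theorem suffixLevenshtein_cons₁ (x : α) (xs : List α) (ys : List β) :
    suffixLevenshtein C (x :: xs) ys =
      ⟨levenshtein C (x :: xs) ys ::
        (suffixLevenshtein C xs ys).1, by simp⟩ := by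
  induction ys with
  | nil => rfl
  | cons y ys ih =>
    apply suffixLevenshtein_cons₁_aux
    · rfl
    · rw [suffixLevenshtein_cons₂ C (x :: xs), ih, impl_cons]
      · rfl
      · simp [suffixLevenshtein_length]

theorem suffixLevenshtein_cons_cons_fst_get_zero
    (x : α) (xs : List α) (y : β) (ys : List β) (w) :
    (suffixLevenshtein C (x :: xs) (y :: ys)).1[0]'w =
      let ⟨dx, _⟩ := suffixLevenshtein C xs (y :: ys)
      let ⟨dy, _⟩ := suffixLevenshtein C (x :: xs) ys
      let ⟨dxy, _⟩ := suffixLevenshtein C xs ys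
      min
        (C.delete x + dx[0])
        (min
          (C.insert y + dy[0])
          (C.substitute x y + dxy[0])) := by
  conv =>
    lhs
    dsimp only [suffixLevenshtein_cons₂]
  simp only [suffixLevenshtein_cons₁]
  rw [impl_cons_fst_zero]
  rfl

@[simp]
theorem levenshtein_nil_nil : levenshtein C [] [] = 0 := rfl

theorem levenshtein_nil_cons (y : β) (ys : List β) :
    levenshtein C [] (y :: ys) = levenshtein C [] ys + C.insert y := by
  have h := suffixLevenshtein_length C ([] : List α) ys
  show (impl C [] y (suffixLevenshtein C [] ys)).1[0]'(impl C [] y (suffixLevenshtein C [] ys)).2 =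
      (suffixLevenshtein C [] ys).1[0]'(suffixLevenshtein C [] ys).2 + C.insert y
  revert h
  generalize suffixLevenshtein C [] ys = s
  rcases s with ⟨_ | ⟨a, _ | ⟨b, l⟩⟩, hs⟩ <;> intro h <;> simp at h
  rfl

theorem levenshtein_cons_nil (x : α) (xs : List α) :
    levenshtein C (x :: xs) [] = C.delete x + levenshtein C xs [] :=
  rfl

theorem levenshtein_cons_cons
    (x : α) (xs : List α) (y : β) (ys : List β) :
    levenshtein C (x :: xs) (y :: ys) =
      min (C.delete x + levenshtein C xs (y :: ys))
        (min (C.insert y + levenshtein C (x :: xs) ys)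
          (C.substitute x y + levenshtein C xs ys)) :=
  suffixLevenshtein_cons_cons_fst_get_zero ..

end levlemmas

open Finset

lemma editDist_nil_left {k : ℕ} (y : List (Fin k)) : editDist [] y = y.length := by
  induction y with
  | nil => simp [editDist]
  | cons b ys ih =>
    show levenshtein _ [] (b :: ys) = _
    simp only [editDist] at ih
    rw [levenshtein_nil_cons, ih, show (Levenshtein.defaultCost.insert b : ℕ) = 1 from rfl]
    simp [Nat.add_comm]

lemma editDist_nil_right {k : ℕ} (x : List (Fin k)) : editDist x [] = x.length := by
  induction x with
  | nil => simp [editDist]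
  | cons a xs ih =>
    show levenshtein _ (a :: xs) [] = _
    simp only [editDist] at ih
    rw [levenshtein_cons_nil, ih, show (Levenshtein.defaultCost.delete a : ℕ) = 1 from rfl]
    simp [Nat.add_comm]

lemma editDist_le_max {k : ℕ} : ∀ (x y : List (Fin k)), editDist x y ≤ max x.length y.length := by
  intro x
  induction x with
  | nil => intro y; rw [editDist_nil_left]; simp
  | cons a xs ih =>
    intro y
    cases y with
    | nil => rw [editDist_nil_right]; simp
    | cons b ys =>
      have h : editDist (a :: xs) (b :: ys) ≤
          (Levenshtein.defaultCost.substitute a b) + editDist xs ys := by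
        show levenshtein _ _ _ ≤ _
        rw [levenshtein_cons_cons]
        exact (min_le_right _ _).trans (min_le_right _ _)
      have h2 : (Levenshtein.defaultCost.substitute a b : ℕ) ≤ 1 := by
        simp [Levenshtein.defaultCost]; split <;> omega
      have := ih ys
      simp only [List.length_cons]
      omega

lemma exists_common_sublist {k : ℕ} : ∀ (x y : List (Fin k)),
    ∃ z : List (Fin k), z.Sublist x ∧ z.Sublist y ∧ x.length ≤ z.length + editDist x y := by
  intro x
  induction x with
  | nil => intro y; exact ⟨[], List.Sublist.refl _, List.nil_sublist _, by simp⟩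
  | cons a xs ihx =>
    intro y
    induction y with
    | nil =>
      refine ⟨[], List.nil_sublist _, List.Sublist.refl _, ?_⟩
      rw [editDist_nil_right]; simp
    | cons b ys ihy =>
      have hA : editDist (a :: xs) (b :: ys) = 1 + editDist xs (b :: ys) ∨
          editDist (a :: xs) (b :: ys) = 1 + editDist (a :: xs) ys ∨
          editDist (a :: xs) (b :: ys) =
            Levenshtein.defaultCost.substitute a b + editDist xs ys := by
        show levenshtein _ _ _ = _ ∨ levenshtein _ _ _ = _ ∨ levenshtein _ _ _ = _
        rw [levenshtein_cons_cons]
        have h1 : (Levenshtein.defaultCost.delete a : ℕ) = 1 := rfl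
        have h2 : (Levenshtein.defaultCost.insert b : ℕ) = 1 := rfl
        rw [h1, h2]
        rcases min_cases (1 + levenshtein Levenshtein.defaultCost xs (b :: ys))
          (min (1 + levenshtein Levenshtein.defaultCost (a :: xs) ys)
            (Levenshtein.defaultCost.substitute a b + levenshtein Levenshtein.defaultCost xs ys))
          with ⟨h, _⟩ | ⟨h, _⟩
        · left; exact h
        · rw [h]
          rcases min_cases (1 + levenshtein Levenshtein.defaultCost (a :: xs) ys)
            (Levenshtein.defaultCost.substitute a b + levenshtein Levenshtein.defaultCost xs ys)
            with ⟨h', _⟩ | ⟨h', _⟩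
          · right; left; exact h'
          · right; right; exact h'
      rcases hA with h | h | h
      · obtain ⟨z, hzx, hzy, hlen⟩ := ihx (b :: ys)
        exact ⟨z, hzx.cons a, hzy, by simp only [List.length_cons]; omega⟩
      · obtain ⟨z, hzx, hzy, hlen⟩ := ihy
        exact ⟨z, hzx, hzy.cons b, by simp only [List.length_cons] at *; omega⟩
      · obtain ⟨z, hzx, hzy, hlen⟩ := ihx ys
        by_cases hab : a = b
        · subst hab
          have hsub : (Levenshtein.defaultCost.substitute a a : ℕ) = 0 := by
            simp [Levenshtein.defaultCost]
          refine ⟨a :: z, hzx.cons₂ a, hzy.cons₂ a, ?_⟩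
          simp only [List.length_cons]
          omega
        · refine ⟨z, hzx.cons a, hzy.cons b, ?_⟩
          have hsub : (Levenshtein.defaultCost.substitute a b : ℕ) = 1 := by
            simp [Levenshtein.defaultCost, hab]
          simp only [List.length_cons]
          omega


lemma sublist_ofFn_exists_finset {n k d : ℕ} {x : Fin n → Fin k} {z : List (Fin k)}
    (h : z.Sublist (List.ofFn x)) (hd : z.length = d) :
    ∃ s : Finset (Fin n), s.card = d ∧ (s.sort (· ≤ ·)).map x = z := by
  classical
  rw [List.sublist_iff_exists_fin_orderEmbedding_get_eq] at h
  obtain ⟨f, hf⟩ := h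
  set g : Fin z.length → Fin n := fun i => Fin.cast (List.length_ofFn (f := x)) (f i) with hg
  have hmono : StrictMono g := by
    intro i j hij
    show Fin.cast (List.length_ofFn (f := x)) (f i) < Fin.cast (List.length_ofFn (f := x)) (f j)
    rw [Fin.lt_def, Fin.coe_cast, Fin.coe_cast]
    exact f.strictMono hij
  set L : List (Fin n) := List.ofFn g with hL
  have hpw : L.Pairwise (· < ·) := by
    rw [hL, List.pairwise_ofFn]
    intro i j hij; exact hmono hij
  have hnd : L.Nodup := hpw.imp ne_of_lt
  have hsorted : L.Pairwise (· ≤ ·) := hpw.imp le_of_lt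
  refine ⟨L.toFinset, ?_, ?_⟩
  · rw [List.toFinset_card_of_nodup hnd]
    simp [hL, hd]
  · rw [(List.toFinset_sort (· ≤ ·) hnd).mpr hsorted]
    apply List.ext_get
    · simp [hL]
    · intro i h1 h2
      have := hf ⟨i, h2⟩
      simp only [List.get_eq_getElem, List.getElem_map, List.getElem_ofFn, hL] at *
      rw [this]
      refine congrArg x ?_
      rfl

lemma card_pairs_map_eq_le {n k d : ℕ} (s t : Finset (Fin n)) (ht : t.card = d) :
    (univ.filter (fun p : (Fin n → Fin k) × (Fin n → Fin k) =>
       (s.sort (· ≤ ·)).map p.1 = (t.sort (· ≤ ·)).map p.2)).card ≤ k ^ n * k ^ (n - d) := by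
  classical
  have hcard : (univ : Finset ((Fin n → Fin k) × ({i : Fin n // i ∉ t} → Fin k))).card
      = k ^ n * k ^ (n - d) := by
    rw [card_univ, Fintype.card_prod, Fintype.card_fun, Fintype.card_fun,
      Fintype.card_subtype_compl, Fintype.card_coe, ht]
    simp
  rw [← hcard]
  apply Finset.card_le_card_of_injOn
      (fun p => (p.1, fun i : {i : Fin n // i ∉ t} => p.2 i.1))
      (fun a _ => mem_univ _)
  intro p hp q hq he
  simp only [coe_filter, Set.mem_setOf_eq, mem_univ, true_and] at hp hq
  have he' : (p.1, fun i : {i : Fin n // i ∉ t} => p.2 i.1)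
      = (q.1, fun i : {i : Fin n // i ∉ t} => q.2 i.1) := he
  rw [Prod.mk.injEq] at he'
  obtain ⟨h1, h2⟩ := he'
  refine Prod.ext h1 (funext fun i => ?_)
  by_cases hi : i ∈ t
  · have hmem : i ∈ t.sort (· ≤ ·) := (Finset.mem_sort _).mpr hi
    obtain ⟨j, hjlt, hj⟩ := List.mem_iff_getElem.mp hmem
    have hlen : (s.sort (· ≤ ·)).length = (t.sort (· ≤ ·)).length := by
      have := congrArg List.length hp
      simpa using this
    have hjs : j < (s.sort (· ≤ ·)).length := hlen ▸ hjlt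
    have key : ∀ (y : Fin n → Fin k),
        (s.sort (· ≤ ·)).map y = (t.sort (· ≤ ·)).map p.2 → y ((s.sort (· ≤ ·))[j]'hjs) = p.2 i := by
      intro y hy
      have e1 : ((s.sort (· ≤ ·)).map y)[j]'(by simpa using hjs)
          = ((t.sort (· ≤ ·)).map p.2)[j]'(by simpa using hjlt) := List.getElem_of_eq hy _
      rw [List.getElem_map, List.getElem_map, hj] at e1
      exact e1
    have hp2 : p.1 ((s.sort (· ≤ ·))[j]'hjs) = p.2 i := key p.1 hp
    have hq2 : q.1 ((s.sort (· ≤ ·))[j]'hjs) = q.2 i := by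
      have : (s.sort (· ≤ ·)).map q.1 = (t.sort (· ≤ ·)).map q.2 := hq
      have e1 : ((s.sort (· ≤ ·)).map q.1)[j]'(by simpa using hjs)
          = ((t.sort (· ≤ ·)).map q.2)[j]'(by simpa using hjlt) := List.getElem_of_eq this _
      rw [List.getElem_map, List.getElem_map, hj] at e1
      exact e1
    rw [← hp2, h1, hq2]
  · exact congrFun h2 ⟨i, hi⟩

attribute [local instance] Classical.propDecidable

lemma card_bad_le {n k d : ℕ} :
    (univ.filter (fun p : (Fin n → Fin k) × (Fin n → Fin k) =>
       ∃ z : List (Fin k), z.length = d ∧ z.Sublist (List.ofFn p.1) ∧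
         z.Sublist (List.ofFn p.2))).card
      ≤ 4 ^ n * (k ^ n * k ^ (n - d)) := by
  classical
  have hsub : (univ.filter (fun p : (Fin n → Fin k) × (Fin n → Fin k) =>
       ∃ z : List (Fin k), z.length = d ∧ z.Sublist (List.ofFn p.1) ∧
         z.Sublist (List.ofFn p.2)))
      ⊆ (univ : Finset (Finset (Fin n) × Finset (Fin n))).biUnion
      (fun st => univ.filter (fun p : (Fin n → Fin k) × (Fin n → Fin k) =>
        st.2.card = d ∧ (st.1.sort (· ≤ ·)).map p.1 = (st.2.sort (· ≤ ·)).map p.2)) := by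
    intro p hp
    simp only [mem_filter, mem_univ, true_and] at hp
    obtain ⟨z, hzd, hzx, hzy⟩ := hp
    obtain ⟨s, hsc, hsz⟩ := sublist_ofFn_exists_finset hzx hzd
    obtain ⟨t, htc, htz⟩ := sublist_ofFn_exists_finset hzy hzd
    refine mem_biUnion.mpr ⟨(s, t), mem_univ _, ?_⟩
    simp only [mem_filter, mem_univ, true_and]
    exact ⟨htc, by rw [hsz, htz]⟩
  refine (card_le_card hsub).trans (card_biUnion_le.trans ?_)
  have hterm : ∀ st : Finset (Fin n) × Finset (Fin n),
      (univ.filter (fun p : (Fin n → Fin k) × (Fin n → Fin k) =>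
        st.2.card = d ∧ (st.1.sort (· ≤ ·)).map p.1 = (st.2.sort (· ≤ ·)).map p.2)).card
        ≤ k ^ n * k ^ (n - d) := by
    intro st
    by_cases hc : st.2.card = d
    · refine le_trans (card_le_card (monotone_filter_right _ (fun p _ hp => hp.2))) ?_
      exact card_pairs_map_eq_le st.1 st.2 hc
    · have : (univ.filter (fun p : (Fin n → Fin k) × (Fin n → Fin k) =>
          st.2.card = d ∧ (st.1.sort (· ≤ ·)).map p.1 = (st.2.sort (· ≤ ·)).map p.2)) = ∅ := by
        apply filter_false_of_mem
        intro p _ hp2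
        exact hc hp2.1
      rw [this]
      simp
  refine le_trans (Finset.sum_le_card_nsmul _ _ _ (fun st _ => hterm st)) ?_
  have hcard2 : (univ : Finset (Finset (Fin n) × Finset (Fin n))).card = 4 ^ n := by
    rw [card_univ, Fintype.card_prod, Fintype.card_finset, Fintype.card_fin, ← mul_pow]
    norm_num
  rw [hcard2, smul_eq_mul]


lemma sum_cast_eq (k n : ℕ) :
    (∑ x : Fin n → Fin k, ∑ y : Fin n → Fin k, (editDist (List.ofFn x) (List.ofFn y) : ℝ))
      = ((∑ p : (Fin n → Fin k) × (Fin n → Fin k),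
          editDist (List.ofFn p.1) (List.ofFn p.2) : ℕ) : ℝ) := by
  push_cast [Fintype.sum_prod_type]
  rfl

lemma avg_le {k n : ℕ} (hk : 1 ≤ k) : avgEditDist k n ≤ n := by
  have hK : (1:ℝ) ≤ (k:ℝ) := by exact_mod_cast hk
  have hKpos : (0:ℝ) < (k:ℝ) ^ (2*n) := by positivity
  rw [avgEditDist, inv_mul_eq_div, div_le_iff₀ hKpos]
  have hsum : ∑ x : Fin n → Fin k, ∑ y : Fin n → Fin k,
      (editDist (List.ofFn x) (List.ofFn y) : ℝ) ≤ ∑ _x : Fin n → Fin k, ∑ _y : Fin n → Fin k, (n:ℝ) := by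
    apply Finset.sum_le_sum
    intro x _
    apply Finset.sum_le_sum
    intro y _
    have := editDist_le_max (List.ofFn x) (List.ofFn y)
    rw [List.length_ofFn, List.length_ofFn, max_self] at this
    exact_mod_cast this
  refine hsum.trans ?_
  rw [Finset.sum_const, Finset.sum_const, card_univ, Fintype.card_fun, Fintype.card_fin,
    Fintype.card_fin, nsmul_eq_mul, nsmul_eq_mul]
  apply le_of_eq
  push_cast
  rw [two_mul, pow_add]
  ring

lemma avg_ge {k n d : ℕ} (hk : 1 ≤ k) (hd : d ≤ n) :
    ((n:ℝ) - d) - (n:ℝ) * 4 ^ n / (k:ℝ) ^ d ≤ avgEditDist k n := by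
  classical
  set B := univ.filter (fun p : (Fin n → Fin k) × (Fin n → Fin k) =>
     ∃ z : List (Fin k), z.length = d ∧ z.Sublist (List.ofFn p.1) ∧
       z.Sublist (List.ofFn p.2)) with hB
  have hBcard : B.card ≤ 4 ^ n * (k ^ n * k ^ (n - d)) := card_bad_le
  have key : ∀ p : (Fin n → Fin k) × (Fin n → Fin k), p ∉ B →
      n - d ≤ editDist (List.ofFn p.1) (List.ofFn p.2) := by
    intro p hp
    by_contra hlt
    push_neg at hlt
    obtain ⟨z, hzx, hzy, hlen⟩ := exists_common_sublist (List.ofFn p.1) (List.ofFn p.2)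
    rw [List.length_ofFn] at hlen
    have hdz : d ≤ z.length := by omega
    apply hp
    rw [hB, mem_filter]
    exact ⟨mem_univ _, z.take d, by rw [List.length_take]; omega,
      (List.take_sublist _ _).trans hzx, (List.take_sublist _ _).trans hzy⟩
  have hcardU : (univ : Finset ((Fin n → Fin k) × (Fin n → Fin k))).card = k ^ (2 * n) := by
    rw [card_univ, Fintype.card_prod, Fintype.card_fun, Fintype.card_fin, Fintype.card_fin,
      ← pow_add, two_mul]
  have hsumN : (univ \ B).card * (n - d) ≤ ∑ p : (Fin n → Fin k) × (Fin n → Fin k),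
      editDist (List.ofFn p.1) (List.ofFn p.2) := by
    have h1 := Finset.card_nsmul_le_sum (univ \ B)
      (fun p => editDist (List.ofFn p.1) (List.ofFn p.2)) (n - d)
      (fun p hp => key p (mem_sdiff.mp hp).2)
    rw [smul_eq_mul] at h1
    exact h1.trans (Finset.sum_le_sum_of_subset (sdiff_subset))
  have hBle : B.card ≤ k ^ (2*n) := hcardU ▸ card_le_univ B
  have hcs : (univ \ B).card = k ^ (2*n) - B.card := by
    rw [card_sdiff_of_subset (subset_univ _), hcardU]
  -- real versions
  have hK : (1:ℝ) ≤ (k:ℝ) := by exact_mod_cast hk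
  have hKpos : (0:ℝ) < (k:ℝ) := by linarith
  have e1 : (k:ℝ) ^ (2*n) = (k:ℝ)^d * ((k:ℝ)^n * (k:ℝ)^(n-d)) := by
    rw [← pow_add, ← pow_add]
    congr 1
    omega
  have hS : ((k ^ (2*n) - B.card) * (n - d) : ℕ)
      ≤ ∑ p : (Fin n → Fin k) × (Fin n → Fin k), editDist (List.ofFn p.1) (List.ofFn p.2) := by
    rw [← hcs]; exact hsumN
  have hSR : ((k:ℝ)^(2*n) - B.card) * ((n:ℝ) - d)
      ≤ ((∑ p : (Fin n → Fin k) × (Fin n → Fin k),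
          editDist (List.ofFn p.1) (List.ofFn p.2) : ℕ) : ℝ) := by
    have := (Nat.cast_le (α := ℝ)).mpr hS
    push_cast [Nat.cast_sub hBle, Nat.cast_sub hd] at this
    exact_mod_cast this
  have hBR : (B.card : ℝ) ≤ 4 ^ n * ((k:ℝ) ^ n * (k:ℝ) ^ (n - d)) := by
    have := (Nat.cast_le (α := ℝ)).mpr hBcard
    push_cast at this
    exact this
  have main : ((n:ℝ) - d) * (k:ℝ)^(2*n) - (n:ℝ) * 4^n * ((k:ℝ)^n * (k:ℝ)^(n-d))
      ≤ ((∑ p : (Fin n → Fin k) × (Fin n → Fin k),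
          editDist (List.ofFn p.1) (List.ofFn p.2) : ℕ) : ℝ) := by
    refine le_trans ?_ hSR
    have hnd0 : (0:ℝ) ≤ (n:ℝ) - d := by
      have : (d:ℝ) ≤ n := by exact_mod_cast hd
      linarith
    have hndn : (n:ℝ) - d ≤ n := by
      have : (0:ℝ) ≤ d := by positivity
      linarith
    have hB0 : (0:ℝ) ≤ B.card := by positivity
    nlinarith [mul_le_mul hBR hndn hnd0 (by positivity : (0:ℝ) ≤ 4 ^ n * ((k:ℝ) ^ n * (k:ℝ) ^ (n - d)))]
  have goal_eq : ((n:ℝ) - d) - (n:ℝ) * 4 ^ n / (k:ℝ) ^ d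
      = ((k:ℝ) ^ (2*n))⁻¹ *
        (((n:ℝ) - d) * (k:ℝ)^(2*n) - (n:ℝ) * 4^n * ((k:ℝ)^n * (k:ℝ)^(n-d))) := by
    rw [e1]
    have h1 : (k:ℝ)^d ≠ 0 := by positivity
    have h2 : (k:ℝ)^n ≠ 0 := by positivity
    have h3 : (k:ℝ)^(n-d) ≠ 0 := by positivity
    field_simp
  rw [avgEditDist, sum_cast_eq, goal_eq]
  have hinv : (0:ℝ) ≤ ((k:ℝ) ^ (2*n))⁻¹ := by positivity
  exact mul_le_mul_of_nonneg_left main hinv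

lemma alphaN_le_one {k n : ℕ} (hk : 1 ≤ k) : alphaN k n ≤ 1 := by
  by_cases hn : n = 0
  · simp [alphaN, hn]
  · have hnpos : (0:ℝ) < n := by
      have : 1 ≤ n := Nat.one_le_iff_ne_zero.mpr hn
      exact_mod_cast Nat.lt_of_lt_of_le Nat.zero_lt_one this
    rw [alphaN, div_le_one hnpos]
    exact avg_le hk

lemma alphaN_ge {k n d : ℕ} (hk : 1 ≤ k) (hd : d ≤ n) (hn : 1 ≤ n) :
    1 - (d:ℝ)/n - 4^n/(k:ℝ)^d ≤ alphaN k n := by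
  have h := avg_ge (k := k) (n := n) (d := d) hk hd
  have hnpos : (0:ℝ) < n := by exact_mod_cast hn
  rw [alphaN, le_div_iff₀ hnpos]
  have heq : (1 - (d:ℝ)/n - 4^n/(k:ℝ)^d) * n = ((n:ℝ) - d) - (n:ℝ) * 4 ^ n / (k:ℝ) ^ d := by
    have hkd : (k:ℝ)^d ≠ 0 := by
      have : (0:ℝ) < k := by exact_mod_cast hk
      positivity
    field_simp
  rw [heq]
  exact h

/-- If for each `k ≥ 2` the sequence `α_k(n)` converges to `α_k`, then
`α_k → 1` as `k → ∞`. -/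
theorem alpha_tendsto_one (A : ℕ → ℝ)
    (hconv : ∀ k : ℕ, 2 ≤ k → Tendsto (fun n => alphaN k n) atTop (nhds (A k))) :
    Tendsto A atTop (nhds 1) := by
  have hub : ∀ k, 2 ≤ k → A k ≤ 1 := by
    intro k hk
    exact le_of_tendsto (hconv k hk)
      (Filter.Eventually.of_forall (fun n => alphaN_le_one (by omega)))
  have hlb : ∀ m : ℕ, 2 ≤ m → ∀ k, 5 ^ m ≤ k → 1 - 1/(m:ℝ) ≤ A k := by
    intro m hm k hkm
    have hk2 : 2 ≤ k := le_trans (by calc 2 ≤ 5 ^ 1 := by norm_num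
                                        _ ≤ 5 ^ m := Nat.pow_le_pow_right (by norm_num) (by omega)) hkm
    have hk1 : 1 ≤ k := by omega
    have hg : Tendsto (fun n : ℕ => 1 - (1/(m:ℝ) + 1/(n:ℝ)) - (4/5:ℝ)^n)
        atTop (nhds (1 - 1/(m:ℝ))) := by
      have h1 : Tendsto (fun n : ℕ => 1 - (1/(m:ℝ) + 1/(n:ℝ)) - (4/5:ℝ)^n)
          atTop (nhds (1 - (1/(m:ℝ) + 0) - 0)) := by
        refine Tendsto.sub (Tendsto.sub tendsto_const_nhds ?_) ?_
        · exact tendsto_const_nhds.add tendsto_one_div_atTop_nhds_zero_nat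
        · exact tendsto_pow_atTop_nhds_zero_of_lt_one (by norm_num) (by norm_num)
      simpa using h1
    refine le_of_tendsto_of_tendsto hg (hconv k hk2) ?_
    rw [Filter.EventuallyLE, eventually_atTop]
    refine ⟨1, fun n hn => ?_⟩
    set d : ℕ := n / m + 1 with hdd
    have hd2 : n / 2 + 1 ≤ n := by omega
    have hdle : d ≤ n := by
      have := Nat.div_le_div_left (by omega : 2 ≤ m) (by norm_num : 0 < 2) (a := n)
      omega
    have hmd : n ≤ m * d := by
      have h1 := Nat.div_add_mod n m
      have h2 : n % m < m := Nat.mod_lt _ (by omega)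
      have : m * d = m * (n / m) + m := by rw [hdd]; ring
      omega
    -- ratio bound
    have hnpos : (0:ℝ) < n := by exact_mod_cast hn
    have hmpos : (0:ℝ) < m := by positivity
    have hdr : (d:ℝ)/n ≤ 1/(m:ℝ) + 1/(n:ℝ) := by
      have hcast : (d:ℝ) ≤ (n:ℝ)/m + 1 := by
        have h := Nat.cast_div_le (α := ℝ) (m := n) (n := m)
        push_cast [hdd]
        push_cast at h
        linarith
      have heq : ((n:ℝ)/m + 1)/n = 1/(m:ℝ) + 1/(n:ℝ) := by
        field_simp
      rw [← heq]
      gcongr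
    -- power bound
    have hpow : (4:ℝ)^n / (k:ℝ)^d ≤ (4/5:ℝ)^n := by
      have h5 : (5:ℝ)^n ≤ (k:ℝ)^d := by
        calc (5:ℝ)^n ≤ (5:ℝ)^(m*d) := pow_le_pow_right₀ (by norm_num) hmd
          _ = ((5:ℝ)^m)^d := by rw [pow_mul]
          _ ≤ (k:ℝ)^d := by
              apply pow_le_pow_left₀ (by positivity)
              exact_mod_cast hkm
      rw [div_pow]
      apply div_le_div_of_nonneg_left (by positivity) (by positivity) h5
    have halpha := alphaN_ge (k := k) (n := n) (d := d) hk1 hdle hn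
    show 1 - (1/(m:ℝ) + 1/(n:ℝ)) - (4/5:ℝ)^n ≤ alphaN k n
    have h45 : (0:ℝ) ≤ (4/5:ℝ)^n := by positivity
    linarith
  rw [Metric.tendsto_atTop]
  intro ε hε
  set m : ℕ := max 2 (⌈1/ε⌉₊ + 1) with hmdef
  have hm2 : 2 ≤ m := le_max_left _ _
  have hmε : 1/(m:ℝ) < ε := by
    have h1 : (⌈1/ε⌉₊ + 1 : ℕ) ≤ m := le_max_right _ _
    have h2 : (1/ε : ℝ) ≤ ⌈1/ε⌉₊ := Nat.le_ceil _
    have h3 : (1/ε : ℝ) < m := by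
      have : ((⌈1/ε⌉₊ + 1 : ℕ) : ℝ) ≤ m := by exact_mod_cast h1
      push_cast at this
      linarith
    have hmpos : (0:ℝ) < m := by positivity
    rw [div_lt_iff₀ hmpos]
    rw [div_lt_iff₀ hε] at h3
    linarith [mul_comm ε (m:ℝ)]
  refine ⟨5 ^ m, fun k hk => ?_⟩
  have hk2 : 2 ≤ k := le_trans (by calc 2 ≤ 5 ^ 1 := by norm_num
                                      _ ≤ 5 ^ m := Nat.pow_le_pow_right (by norm_num) (by omega)) hk
  have h1 := hub k hk2
  have h2 := hlb m hm2 k hk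
  rw [Real.dist_eq, abs_lt]
  constructor <;> linarith
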